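/- The map A ↦ (ρ(A), č(A), R(A)) is a bijection (in fact homeomorphism) from the space of non-degenerated compact convex subsets of ℝⁿ onto ℬⁿ × ℝⁿ × (0,∞), where ℬⁿ is the family of compact convex sets with circumball equal to the closed unit ball; its inverse is (A, x, λ) ↦ λA + x. -/

import Mathlib

open Metric Set

noncomputable section

/-- `E n` is the Euclidean space `ℝⁿ`. -/
abbrev E (n : ℕ) := EuclideanSpace ℝ (Fin n)

/-- `IsCircumball A c r` : the closed ball of center `c` and radius `r` is the smallest
enclosing ball of `A` (ball of minimal radius containing `A`). -/
def IsCircumball {n : ℕ} (A : Set (E n)) (c : E n) (r : ℝ) : Prop :=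
  A ⊆ closedBall c r ∧ ∀ c' r', A ⊆ closedBall c' r' → r ≤ r'

/-- A similarity of `ℝⁿ`: a map of the form `x ↦ u + λ σ x` with `λ > 0` and `σ` orthogonal. -/
def IsSimilarity {n : ℕ} (g : E n → E n) : Prop :=
  ∃ (u : E n) (l : ℝ) (σ : E n ≃ₗᵢ[ℝ] E n), 0 < l ∧ ∀ x, g x = u + l • σ x

variable {n : ℕ}

lemma circ_nonneg {A : Set (E n)} {c : E n} {r : ℝ} (h : A ⊆ closedBall c r)
    (hA : A.Nonempty) : 0 ≤ r := by
  obtain ⟨a, ha⟩ := hA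
  have := h ha
  simp only [mem_closedBall] at this
  exact le_trans dist_nonneg this

lemma circ_pos {A : Set (E n)} {c : E n} {r : ℝ} (h : A ⊆ closedBall c r)
    (hA : A.Nontrivial) : 0 < r := by
  obtain ⟨a, ha, b, hb, hab⟩ := hA
  have h1 := h ha; have h2 := h hb
  simp only [mem_closedBall] at h1 h2
  have : dist a b ≤ 2 * r := by
    calc dist a b ≤ dist a c + dist c b := dist_triangle a c b
    _ ≤ r + r := add_le_add h1 (dist_comm c b ▸ h2)
    _ = 2 * r := by ring
  nlinarith [dist_pos.2 hab]

lemma subset_ball_mid {A : Set (E n)} {c1 c2 : E n} {M : ℝ}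
    (h1 : A ⊆ closedBall c1 M) (h2 : A ⊆ closedBall c2 M) :
    A ⊆ closedBall (midpoint ℝ c1 c2) (Real.sqrt (M ^ 2 - dist c1 c2 ^ 2 / 4)) := by
  intro z hz
  have k1 := h1 hz; have k2 := h2 hz
  simp only [mem_closedBall] at k1 k2 ⊢
  have key := EuclideanGeometry.dist_sq_add_dist_sq_eq_two_mul_dist_midpoint_sq_add_half_dist_sq z c1 c2
  have hM : 0 ≤ M := le_trans dist_nonneg k1
  have : dist z (midpoint ℝ c1 c2) ^ 2 ≤ M ^ 2 - dist c1 c2 ^ 2 / 4 := by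
    nlinarith [dist_nonneg (x := z) (y := c1), dist_nonneg (x := z) (y := c2)]
  calc dist z (midpoint ℝ c1 c2) = Real.sqrt (dist z (midpoint ℝ c1 c2) ^ 2) := by
        rw [Real.sqrt_sq dist_nonneg]
  _ ≤ Real.sqrt (M ^ 2 - dist c1 c2 ^ 2 / 4) := Real.sqrt_le_sqrt this

lemma circ_center_bound {A : Set (E n)} {c1 c2 : E n} {r M : ℝ} (hA : A.Nonempty)
    (hc : IsCircumball A c1 r) (h1 : A ⊆ closedBall c1 M) (h2 : A ⊆ closedBall c2 M) :
    dist c1 c2 ^ 2 ≤ 4 * (M ^ 2 - r ^ 2) := by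
  have hr : 0 ≤ r := circ_nonneg hc.1 hA
  obtain ⟨z, hz⟩ := hA
  have hz1 := h1 hz; have hz2 := h2 hz
  simp only [mem_closedBall] at hz1 hz2
  have hd2 : dist c1 c2 ≤ 2 * M := by
    calc dist c1 c2 ≤ dist c1 z + dist z c2 := dist_triangle _ _ _
    _ ≤ M + M := add_le_add (dist_comm c1 z ▸ hz1) hz2
    _ = 2 * M := by ring
  have hM : 0 ≤ M := le_trans dist_nonneg hz1
  have hnn : 0 ≤ M ^ 2 - dist c1 c2 ^ 2 / 4 := by
    nlinarith [dist_nonneg (x := c1) (y := c2)]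
  have hle := hc.2 _ _ (subset_ball_mid h1 h2)
  have hsq := Real.sq_sqrt hnn
  nlinarith [Real.sqrt_nonneg (M ^ 2 - dist c1 c2 ^ 2 / 4)]

lemma circ_unique {A : Set (E n)} {c1 c2 : E n} {r1 r2 : ℝ} (hA : A.Nonempty)
    (h1 : IsCircumball A c1 r1) (h2 : IsCircumball A c2 r2) : c1 = c2 ∧ r1 = r2 := by
  have hr : r1 = r2 := le_antisymm (h1.2 _ _ h2.1) (h2.2 _ _ h1.1)
  subst hr
  refine ⟨?_, rfl⟩
  have := circ_center_bound hA h1 h1.1 h2.1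
  have hd : dist c1 c2 ^ 2 ≤ 0 := by linarith
  have := dist_nonneg (x := c1) (y := c2)
  have : dist c1 c2 = 0 := by nlinarith
  exact dist_eq_zero.1 this

lemma dist_affine {l : ℝ} (hl : 0 < l) (x0 y c' : E n) :
    dist (l • y + x0) c' = l * dist y (l⁻¹ • (c' - x0)) := by
  rw [dist_eq_norm, dist_eq_norm]
  rw [← norm_smul_of_nonneg hl.le]
  congr 1
  rw [smul_sub, smul_smul, mul_inv_cancel₀ hl.ne', one_smul]
  abel

lemma subset_ball_affine {l : ℝ} (hl : 0 < l) {A : Set (E n)} {x0 c' : E n} {r' : ℝ} :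
    (fun y => l • y + x0) '' A ⊆ closedBall c' r' ↔
      A ⊆ closedBall (l⁻¹ • (c' - x0)) (r' / l) := by
  constructor
  · intro h y hy
    have := h ⟨y, hy, rfl⟩
    simp only [mem_closedBall] at this ⊢
    rw [dist_affine hl] at this
    exact (le_div_iff₀' hl).2 this
  · intro h z hz
    obtain ⟨y, hy, rfl⟩ := hz
    have := h hy
    simp only [mem_closedBall] at this ⊢
    rw [dist_affine hl]
    calc l * dist y (l⁻¹ • (c' - x0)) ≤ l * (r' / l) := by
          exact mul_le_mul_of_nonneg_left this hl.le
    _ = r' := by field_simp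

lemma circ_affine {l : ℝ} (hl : 0 < l) {A : Set (E n)} {x0 c : E n} {r : ℝ}
    (h : IsCircumball A c r) :
    IsCircumball ((fun y => l • y + x0) '' A) (l • c + x0) (l * r) := by
  constructor
  · rintro z ⟨y, hy, rfl⟩
    simp only [mem_closedBall]
    have hyc := h.1 hy
    simp only [mem_closedBall] at hyc
    have : dist (l • y + x0) (l • c + x0) = l * dist y c := by
      rw [dist_eq_norm, dist_eq_norm, ← norm_smul_of_nonneg hl.le]
      congr 1
      rw [smul_sub]
      abel
    rw [this]
    exact mul_le_mul_of_nonneg_left hyc hl.le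
  · intro c' r' hsub
    rw [subset_ball_affine hl] at hsub
    have := h.2 _ _ hsub
    calc l * r ≤ l * (r' / l) := mul_le_mul_of_nonneg_left this hl.le
    _ = r' := by field_simp

lemma exists_close {A B : Set (E n)} (hB : IsCompact B) (hBne : B.Nonempty)
    (hA : Bornology.IsBounded A) {a : E n} (ha : a ∈ A) :
    ∃ b ∈ B, dist a b ≤ hausdorffDist A B := by
  have hfin : EMetric.hausdorffEdist A B ≠ ⊤ :=
    hausdorffEdist_ne_top_of_nonempty_of_bounded ⟨a, ha⟩ hBne hA hB.isBounded
  obtain ⟨b, hb, hdb⟩ := hB.exists_infDist_eq_dist hBne a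
  exact ⟨b, hb, by rw [← hdb]; exact infDist_le_hausdorffDist_of_mem ha hfin⟩

lemma hdist_pointwise {A : Set (E n)} (hAne : A.Nonempty) {f g : E n → E n} {m : ℝ}
    (hm : 0 ≤ m) (h : ∀ a ∈ A, dist (f a) (g a) ≤ m) :
    hausdorffDist (f '' A) (g '' A) ≤ m := by
  apply hausdorffDist_le_of_mem_dist hm
  · rintro z ⟨a, ha, rfl⟩; exact ⟨g a, ⟨a, ha, rfl⟩, h a ha⟩
  · rintro z ⟨a, ha, rfl⟩; exact ⟨f a, ⟨a, ha, rfl⟩, dist_comm (f a) (g a) ▸ h a ha⟩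

lemma hdist_lipschitz {A B : Set (E n)} (hA : IsCompact A) (hAne : A.Nonempty)
    (hB : IsCompact B) (hBne : B.Nonempty) {f : E n → E n} {L : ℝ} (hL : 0 ≤ L)
    (h : ∀ x y, dist (f x) (f y) ≤ L * dist x y) :
    hausdorffDist (f '' A) (f '' B) ≤ L * hausdorffDist A B := by
  have hd : 0 ≤ hausdorffDist A B := hausdorffDist_nonneg
  apply hausdorffDist_le_of_mem_dist (mul_nonneg hL hd)
  · rintro z ⟨a, ha, rfl⟩
    obtain ⟨b, hb, hab⟩ := exists_close hB hBne hA.isBounded ha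
    exact ⟨f b, ⟨b, hb, rfl⟩, le_trans (h a b) (mul_le_mul_of_nonneg_left hab hL)⟩
  · rintro z ⟨b, hb, rfl⟩
    obtain ⟨a, ha, hab⟩ := exists_close hA hAne hB.isBounded hb
    refine ⟨f a, ⟨a, ha, rfl⟩, le_trans (h b a) ?_⟩
    rw [hausdorffDist_comm]
    exact mul_le_mul_of_nonneg_left hab hL

lemma continuousAt_of_bound {X Y : Type*} [PseudoMetricSpace X] [PseudoMetricSpace Y]
    {f : X → Y} {x0 : X} {F : ℝ → ℝ}
    (hF : ∀ ε > 0, ∃ δ > 0, ∀ t, 0 ≤ t → t < δ → F t < ε)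
    (h : ∃ η > 0, ∀ x, dist x x0 < η → dist (f x) (f x0) ≤ F (dist x x0)) :
    ContinuousAt f x0 := by
  rw [Metric.continuousAt_iff]
  intro ε hε
  obtain ⟨δ, hδ, hFδ⟩ := hF ε hε
  obtain ⟨η, hη, hb⟩ := h
  refine ⟨min δ η, lt_min hδ hη, fun {x} hx => ?_⟩
  exact lt_of_le_of_lt (hb x (lt_of_lt_of_le hx (min_le_right _ _)))
    (hFδ _ dist_nonneg (lt_of_lt_of_le hx (min_le_left _ _)))

lemma sqrtF {C : ℝ} (hC : 0 < C) :
    ∀ ε > 0, ∃ δ > 0, ∀ t, 0 ≤ t → t < δ → C * (t + Real.sqrt t) < ε := by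
  intro ε hε
  refine ⟨min 1 ((ε / (4 * C)) ^ 2), lt_min one_pos (by positivity), fun t ht htδ => ?_⟩
  have ht1 : t < 1 := lt_of_lt_of_le htδ (min_le_left _ _)
  have ht2 : t < (ε / (4 * C)) ^ 2 := lt_of_lt_of_le htδ (min_le_right _ _)
  have hsq : Real.sqrt t < ε / (4 * C) := by
    have := Real.sqrt_lt_sqrt ht ht2
    rwa [Real.sqrt_sq (by positivity)] at this
  have htle : t ≤ Real.sqrt t := by
    nlinarith [Real.sq_sqrt ht, Real.sqrt_nonneg t, Real.sqrt_le_sqrt ht1.le,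
      Real.sqrt_one]
  have hsn : 0 ≤ Real.sqrt t := Real.sqrt_nonneg t
  have h4 : C * (ε / (4 * C)) = ε / 4 := by field_simp
  have h5 := mul_le_mul_of_nonneg_left htle hC.le
  have h6 := mul_lt_mul_of_pos_left hsq hC
  nlinarith

lemma linF {C : ℝ} (hC : 0 < C) :
    ∀ ε > 0, ∃ δ > 0, ∀ t, 0 ≤ t → t < δ → C * t < ε := by
  intro ε hε
  exact ⟨ε / C, by positivity, fun t ht htδ => by
    rw [lt_div_iff₀ hC, mul_comm] at htδ; exact htδ⟩

lemma convex_affine_image {l : ℝ} {x0 : E n} {A : Set (E n)} (hA : Convex ℝ A) :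
    Convex ℝ ((fun y => l • y + x0) '' A) := by
  rintro _ ⟨y1, hy1, rfl⟩ _ ⟨y2, hy2, rfl⟩ a b ha hb hab
  refine ⟨a • y1 + b • y2, hA hy1 hy2 ha hb hab, ?_⟩
  have h1 : a • (l • y1 + x0) + b • (l • y2 + x0)
      = l • (a • y1 + b • y2) + (a + b) • x0 := by
    simp only [smul_add, smul_smul, add_smul, mul_comm]
    abel
  rw [h1, hab, one_smul]

lemma nontrivial_affine_image {l : ℝ} (hl : l ≠ 0) {x0 : E n} {A : Set (E n)}
    (hA : A.Nontrivial) : ((fun y => l • y + x0) '' A).Nontrivial := by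
  obtain ⟨a, ha, b, hb, hab⟩ := hA
  refine ⟨_, ⟨a, ha, rfl⟩, _, ⟨b, hb, rfl⟩, fun h => hab ?_⟩
  exact smul_right_injective _ hl (add_right_cancel h)

lemma compact_affine_image {l : ℝ} {x0 : E n} {A : Set (E n)} (hA : IsCompact A) :
    IsCompact ((fun y => l • y + x0) '' A) :=
  hA.image ((continuous_id.const_smul l).add continuous_const)

lemma affine_cancel {l : ℝ} (hl : l ≠ 0) {x0 : E n} {A : Set (E n)} :
    (fun y => l • y + x0) '' ((fun x => l⁻¹ • (x - x0)) '' A) = A := by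
  rw [Set.image_image]
  have h : ∀ x : E n, l • l⁻¹ • (x - x0) + x0 = x := fun x => by
    rw [smul_smul, mul_inv_cancel₀ hl, one_smul]; abel
  simp only [h, Set.image_id']

lemma affine_cancel' {l : ℝ} (hl : l ≠ 0) {x0 : E n} {A : Set (E n)} :
    (fun x => l⁻¹ • (x - x0)) '' ((fun y => l • y + x0) '' A) = A := by
  rw [Set.image_image]
  have h : ∀ x : E n, l⁻¹ • (l • x + x0 - x0) = x := fun x => by
    rw [add_sub_cancel_right, smul_smul, inv_mul_cancel₀ hl, one_smul]
  simp only [h, Set.image_id']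

lemma fun_aff_eq {l : ℝ} {c0 : E n} :
    (fun x : E n => l • (x - c0)) = (fun x => l • x + (-(l • c0))) := by
  funext x
  rw [smul_sub, sub_eq_add_neg]

section Main

open TopologicalSpace

variable (R : Set (E n) → ℝ) (c : Set (E n) → E n)
  (hRc : ∀ A : Set (E n), IsCompact A → Convex ℝ A → A.Nontrivial →
    IsCircumball A (c A) (R A))

include hRc

abbrev KHyp' (n : ℕ) :=
  {K : TopologicalSpace.NonemptyCompacts (E n) //
    Convex ℝ (K : Set (E n)) ∧ (K : Set (E n)).Nontrivial}

abbrev BHyp' (n : ℕ) :=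
  {K : TopologicalSpace.NonemptyCompacts (E n) //
    Convex ℝ (K : Set (E n)) ∧ (K : Set (E n)).Nontrivial ∧ IsCircumball (K : Set (E n)) 0 1}

lemma hcirc (K : KHyp' n) : IsCircumball (K.1 : Set (E n)) (c (K.1 : Set (E n))) (R (K.1 : Set (E n))) :=
  hRc _ K.1.isCompact K.2.1 K.2.2

lemma hRpos (K : KHyp' n) : 0 < R (K.1 : Set (E n)) :=
  circ_pos (hcirc R c hRc K).1 K.2.2

/-- the normalized body -/
def fwdSet (K : KHyp' n) : Set (E n) :=
  (fun x => (R (K.1 : Set (E n)))⁻¹ • (x - c (K.1 : Set (E n)))) '' (K.1 : Set (E n))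

lemma fwdSet_eq (K : KHyp' n) : fwdSet R c K =
    (fun x => (R (K.1 : Set (E n)))⁻¹ • x +
      (-((R (K.1 : Set (E n)))⁻¹ • c (K.1 : Set (E n))))) '' (K.1 : Set (E n)) := by
  rw [fwdSet, fun_aff_eq]

lemma fwd_circ (K : KHyp' n) : IsCircumball (fwdSet R c K) 0 1 := by
  have hp := hRpos R c hRc K
  have h := circ_affine (inv_pos.2 hp)
    (x0 := -((R (K.1 : Set (E n)))⁻¹ • c (K.1 : Set (E n)))) (hcirc R c hRc K)
  rw [fwdSet_eq R c hRc]
  convert h using 2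
  · simp
  · rw [inv_mul_cancel₀ hp.ne']

lemma fwd_compact (K : KHyp' n) : IsCompact (fwdSet R c K) := by
  rw [fwdSet_eq R c hRc]
  exact compact_affine_image K.1.isCompact

lemma fwd_nonempty (K : KHyp' n) : (fwdSet R c K).Nonempty :=
  K.1.nonempty.image _

lemma fwd_convex (K : KHyp' n) : Convex ℝ (fwdSet R c K) := by
  rw [fwdSet_eq R c hRc]
  exact convex_affine_image K.2.1

lemma fwd_nontrivial (K : KHyp' n) : (fwdSet R c K).Nontrivial := by
  rw [fwdSet_eq R c hRc]
  exact nontrivial_affine_image (inv_ne_zero (hRpos R c hRc K).ne') K.2.2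

def fwdNC (K : KHyp' n) : NonemptyCompacts (E n) :=
  ⟨⟨fwdSet R c K, fwd_compact R c hRc K⟩, fwd_nonempty R c hRc K⟩

def toFunΦ (K : KHyp' n) : BHyp' n × E n × {l : ℝ // 0 < l} :=
  (⟨fwdNC R c hRc K, fwd_convex R c hRc K, fwd_nontrivial R c hRc K, fwd_circ R c hRc K⟩,
    c (K.1 : Set (E n)), ⟨R (K.1 : Set (E n)), hRpos R c hRc K⟩)

def invSet (A : BHyp' n) (x : E n) (l : {l : ℝ // 0 < l}) : Set (E n) :=
  (fun y => (l : ℝ) • y + x) '' (A.1 : Set (E n))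

lemma inv_circ (A : BHyp' n) (x : E n) (l : {l : ℝ // 0 < l}) :
    IsCircumball (invSet A x l) x (l : ℝ) := by
  have := circ_affine l.2 (x0 := x) A.2.2.2
  simpa [invSet] using this

def invFunΦ (p : BHyp' n × E n × {l : ℝ // 0 < l}) : KHyp' n :=
  ⟨⟨⟨invSet p.1 p.2.1 p.2.2, compact_affine_image p.1.1.isCompact⟩,
      p.1.1.nonempty.image _⟩,
    convex_affine_image p.1.2.1, nontrivial_affine_image p.2.2.2.ne' p.1.2.2.1⟩


lemma left_invΦ (K : KHyp' n) : invFunΦ (toFunΦ R c hRc K) = K := by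
  apply Subtype.ext
  apply TopologicalSpace.NonemptyCompacts.ext
  show (fun y => (R (K.1 : Set (E n))) • y + c (K.1 : Set (E n))) '' (fwdSet R c K)
      = (K.1 : Set (E n))
  rw [fwdSet]
  exact affine_cancel (hRpos R c hRc K).ne'

lemma inv_cR (A : BHyp' n) (x : E n) (l : {l : ℝ // 0 < l}) :
    c (invSet A x l) = x ∧ R (invSet A x l) = (l : ℝ) := by
  have h1 : IsCircumball (invSet A x l) (c (invSet A x l)) (R (invSet A x l)) :=
    hRc _ (compact_affine_image A.1.isCompact) (convex_affine_image A.2.1)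
      (nontrivial_affine_image l.2.ne' A.2.2.1)
  exact circ_unique (A.1.nonempty.image _) h1 (inv_circ R c hRc A x l)

lemma right_invΦ (p : BHyp' n × E n × {l : ℝ // 0 < l}) :
    toFunΦ R c hRc (invFunΦ p) = p := by
  obtain ⟨A, x, l⟩ := p
  obtain ⟨hc', hR'⟩ := inv_cR R c hRc A x l
  have hset : (((invFunΦ (A, x, l)) : KHyp' n).1 : Set (E n)) = invSet A x l := rfl
  refine Prod.ext ?_ (Prod.ext ?_ ?_)
  · apply Subtype.ext
    apply TopologicalSpace.NonemptyCompacts.ext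
    show fwdSet R c (invFunΦ (A, x, l)) = (A.1 : Set (E n))
    rw [fwdSet]
    rw [show ((((invFunΦ (A, x, l)) : KHyp' n).1 : TopologicalSpace.NonemptyCompacts (E n))
        : Set (E n)) = invSet A x l from rfl]
    rw [hc', hR', invSet]
    exact affine_cancel' l.2.ne'
  · show c ((invFunΦ (A, x, l) : KHyp' n).1 : Set (E n)) = x
    rw [hset]; exact hc'
  · apply Subtype.ext
    show R ((invFunΦ (A, x, l) : KHyp' n).1 : Set (E n)) = (l : ℝ)
    rw [hset]; exact hR'

lemma subset_ball_of_close (K K0 : KHyp' n) :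
    (K.1 : Set (E n)) ⊆ closedBall (c (K0.1 : Set (E n))) (R (K0.1 : Set (E n)) + dist K K0) := by
  intro a ha
  obtain ⟨b, hb, hab⟩ := exists_close K0.1.isCompact K0.1.nonempty K.1.isCompact.isBounded ha
  have hb0 := (hcirc R c hRc K0).1 hb
  simp only [mem_closedBall] at hb0 ⊢
  have hd : dist K K0 = hausdorffDist (K.1 : Set (E n)) (K0.1 : Set (E n)) := by
    rw [Subtype.dist_eq, Metric.NonemptyCompacts.dist_eq]
  calc dist a (c (K0.1 : Set (E n))) ≤ dist a b + dist b (c (K0.1 : Set (E n))) :=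
        dist_triangle _ _ _
  _ ≤ hausdorffDist (K.1 : Set (E n)) (K0.1 : Set (E n)) + R (K0.1 : Set (E n)) :=
        add_le_add hab hb0
  _ = R (K0.1 : Set (E n)) + dist K K0 := by rw [hd]; ring

lemma R_lip (K K0 : KHyp' n) :
    R (K.1 : Set (E n)) ≤ R (K0.1 : Set (E n)) + dist K K0 :=
  (hcirc R c hRc K).2 _ _ (subset_ball_of_close R c hRc K K0)

lemma c_bound (K K0 : KHyp' n) (hd : dist K K0 ≤ R (K0.1 : Set (E n))) :
    dist (c (K.1 : Set (E n))) (c (K0.1 : Set (E n)))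
      ≤ 4 * Real.sqrt (R (K0.1 : Set (E n))) * Real.sqrt (dist K K0) := by
  set d := dist K K0 with hdd
  set r0 := R (K0.1 : Set (E n)) with hr0
  set rK := R (K.1 : Set (E n)) with hrK
  have hdn : 0 ≤ d := dist_nonneg
  have hKle : rK ≤ r0 + d := R_lip R c hRc K K0
  have hKge : r0 - d ≤ rK := by
    have := R_lip R c hRc K0 K
    rw [dist_comm] at this
    linarith
  have hsub1 : (K.1 : Set (E n)) ⊆ closedBall (c (K.1 : Set (E n))) (r0 + d) :=
    fun a ha => closedBall_subset_closedBall hKle ((hcirc R c hRc K).1 ha)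
  have hsub2 := subset_ball_of_close R c hRc K K0
  have hb := circ_center_bound K.1.nonempty (hcirc R c hRc K) hsub1 hsub2
  have h2 : dist (c (K.1 : Set (E n))) (c (K0.1 : Set (E n))) ^ 2 ≤ 16 * r0 * d := by
    nlinarith
  have hr0n : 0 ≤ r0 := by linarith
  calc dist (c (K.1 : Set (E n))) (c (K0.1 : Set (E n)))
      = Real.sqrt (dist (c (K.1 : Set (E n))) (c (K0.1 : Set (E n))) ^ 2) :=
        (Real.sqrt_sq dist_nonneg).symm
  _ ≤ Real.sqrt ((4 * Real.sqrt r0 * Real.sqrt d) ^ 2) := by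
      apply Real.sqrt_le_sqrt
      have : (4 * Real.sqrt r0 * Real.sqrt d) ^ 2 = 16 * r0 * d := by
        rw [mul_pow, mul_pow, Real.sq_sqrt hr0n, Real.sq_sqrt hdn]; norm_num
      rw [this]; exact h2
  _ = 4 * Real.sqrt r0 * Real.sqrt d := Real.sqrt_sq (by positivity)

lemma cont_c : Continuous (fun K : KHyp' n => c (K.1 : Set (E n))) := by
  rw [continuous_iff_continuousAt]
  intro K0
  set r0 := R (K0.1 : Set (E n)) with hr0
  have hr0p : 0 < r0 := hRpos R c hRc K0
  apply continuousAt_of_bound (F := fun t => (4 * Real.sqrt r0 + 1) * (t + Real.sqrt t))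
  · exact sqrtF (by positivity)
  · refine ⟨r0, hr0p, fun K hK => ?_⟩
    have h := c_bound R c hRc K K0 hK.le
    have h1 : 0 ≤ Real.sqrt (dist K K0) := Real.sqrt_nonneg _
    have h2 : 0 ≤ dist K K0 := dist_nonneg
    have h3 : 0 ≤ Real.sqrt r0 := Real.sqrt_nonneg _
    nlinarith

lemma cont_R : Continuous (fun K : KHyp' n => R (K.1 : Set (E n))) := by
  rw [continuous_iff_continuousAt]
  intro K0
  apply continuousAt_of_bound (F := fun t => 1 * t)
  · exact linF one_pos
  · refine ⟨1, one_pos, fun K _ => ?_⟩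
    rw [Real.dist_eq, one_mul, abs_le]
    have h1 := R_lip R c hRc K K0
    have h2 := R_lip R c hRc K0 K
    rw [dist_comm] at h2
    constructor <;> linarith

set_option maxHeartbeats 2000000 in
lemma cont_fwd : Continuous (fun K : KHyp' n => fwdNC R c hRc K) := by
  rw [continuous_iff_continuousAt]
  intro K0
  set r0 := R (K0.1 : Set (E n)) with hr0def
  set c0 := c (K0.1 : Set (E n)) with hc0def
  have hr0p : 0 < r0 := hRpos R c hRc K0
  set C : ℝ := 2 * (r0 + 1) / r0 ^ 2 + 4 * Real.sqrt r0 / r0 + 1 / r0 + 1 with hCdef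
  have hCpos : 0 < C := by positivity
  apply continuousAt_of_bound (F := fun t => C * (t + Real.sqrt t))
  · exact sqrtF hCpos
  · refine ⟨min (r0 / 2) 1, by positivity, fun K hK => ?_⟩
    set d := dist K K0 with hddef
    have hdn : 0 ≤ d := dist_nonneg
    have hd1 : d < r0 / 2 := lt_of_lt_of_le hK (min_le_left _ _)
    have hd2 : d < 1 := lt_of_lt_of_le hK (min_le_right _ _)
    set rK := R (K.1 : Set (E n)) with hrKdef
    set cK := c (K.1 : Set (E n)) with hcKdef
    have hKle : rK ≤ r0 + d := R_lip R c hRc K K0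
    have hKge : r0 - d ≤ rK := by
      have := R_lip R c hRc K0 K; rw [dist_comm] at this; linarith
    have hrKp : r0 / 2 ≤ rK := by linarith
    have hrKpos : 0 < rK := by linarith
    have hcc : dist cK c0 ≤ 4 * Real.sqrt r0 * Real.sqrt d :=
      c_bound R c hRc K K0 (by linarith)
    set g : E n → E n := fun x => r0⁻¹ • (x - c0) with hgdef
    set fK : E n → E n := fun x => rK⁻¹ • (x - cK) with hfKdef
    set m1 : ℝ := 2 * (r0 + 1) / r0 ^ 2 * d + 4 * Real.sqrt r0 / r0 * Real.sqrt d with hm1def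
    have hm1n : 0 ≤ m1 := by positivity
    -- pointwise estimate
    have hpt : ∀ x ∈ (K.1 : Set (E n)), dist (fK x) (g x) ≤ m1 := by
      intro x hx
      have hxK : ‖x - cK‖ ≤ r0 + 1 := by
        have := (hcirc R c hRc K).1 hx
        simp only [mem_closedBall] at this
        rw [← dist_eq_norm]
        linarith
      have hsplit : fK x - g x = (rK⁻¹ - r0⁻¹) • (x - cK) + r0⁻¹ • (c0 - cK) := by
        simp only [hfKdef, hgdef, sub_smul, smul_sub]
        abel
      have hinv : |rK⁻¹ - r0⁻¹| ≤ 2 * d / r0 ^ 2 := by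
        have he : rK⁻¹ - r0⁻¹ = (r0 - rK) / (rK * r0) := by
          field_simp
        rw [he, abs_div, abs_of_pos (mul_pos hrKpos hr0p)]
        rw [div_le_div_iff₀ (mul_pos hrKpos hr0p) (by positivity)]
        have habs : |r0 - rK| ≤ d := abs_le.2 ⟨by linarith, by linarith⟩
        nlinarith [abs_nonneg (r0 - rK), mul_le_mul_of_nonneg_right habs (sq_nonneg r0),
          mul_nonneg hdn (by nlinarith : (0:ℝ) ≤ 2 * (rK * r0) - r0 ^ 2)]
      calc dist (fK x) (g x) = ‖fK x - g x‖ := dist_eq_norm _ _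
      _ ≤ ‖(rK⁻¹ - r0⁻¹) • (x - cK)‖ + ‖r0⁻¹ • (c0 - cK)‖ := by
          rw [hsplit]; exact norm_add_le _ _
      _ = |rK⁻¹ - r0⁻¹| * ‖x - cK‖ + |r0⁻¹| * ‖c0 - cK‖ := by
          rw [norm_smul, norm_smul, Real.norm_eq_abs, Real.norm_eq_abs]
      _ ≤ (2 * d / r0 ^ 2) * (r0 + 1) + r0⁻¹ * (4 * Real.sqrt r0 * Real.sqrt d) := by
          have h1 : ‖c0 - cK‖ ≤ 4 * Real.sqrt r0 * Real.sqrt d := by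
            rw [← dist_eq_norm, dist_comm]; exact hcc
          have h2 : |r0⁻¹| = r0⁻¹ := abs_of_pos (by positivity)
          rw [h2]
          exact add_le_add (mul_le_mul hinv hxK (norm_nonneg _) (by positivity))
            (mul_le_mul_of_nonneg_left h1 (by positivity))
      _ = m1 := by
          rw [hm1def]; ring
    -- Lipschitz estimate for g
    have hgl : ∀ x y : E n, dist (g x) (g y) ≤ r0⁻¹ * dist x y := by
      intro x y
      rw [dist_eq_norm, dist_eq_norm]
      have : g x - g y = r0⁻¹ • (x - y) := by
        simp only [hgdef, smul_sub]; abel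
      rw [this, norm_smul, Real.norm_eq_abs, abs_of_pos (by positivity : (0:ℝ) < r0⁻¹)]
    -- assemble
    have hdC : dist (fwdNC R c hRc K) (fwdNC R c hRc K0)
        = hausdorffDist (fwdSet R c K) (fwdSet R c K0) :=
      Metric.NonemptyCompacts.dist_eq
    rw [hdC]
    have hKset : fwdSet R c K = fK '' (K.1 : Set (E n)) := rfl
    have hK0set : fwdSet R c K0 = g '' (K0.1 : Set (E n)) := rfl
    have hmidc : IsCompact (g '' (K.1 : Set (E n))) :=
      K.1.isCompact.image (by rw [hgdef]; fun_prop)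
    have hfKc : IsCompact (fK '' (K.1 : Set (E n))) :=
      K.1.isCompact.image (by rw [hfKdef]; fun_prop)
    have hgK0c : IsCompact (g '' (K0.1 : Set (E n))) :=
      K0.1.isCompact.image (by rw [hgdef]; fun_prop)
    have fin1 : EMetric.hausdorffEdist (fK '' (K.1 : Set (E n))) (g '' (K.1 : Set (E n))) ≠ ⊤ :=
      hausdorffEdist_ne_top_of_nonempty_of_bounded (K.1.nonempty.image _) (K.1.nonempty.image _)
        hfKc.isBounded hmidc.isBounded
    have fin2 : EMetric.hausdorffEdist (g '' (K.1 : Set (E n))) (g '' (K0.1 : Set (E n))) ≠ ⊤ :=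
      hausdorffEdist_ne_top_of_nonempty_of_bounded (K.1.nonempty.image _) (K0.1.nonempty.image _)
        hmidc.isBounded hgK0c.isBounded
    have tri : hausdorffDist (fK '' (K.1 : Set (E n))) (g '' (K0.1 : Set (E n)))
        ≤ hausdorffDist (fK '' (K.1 : Set (E n))) (g '' (K.1 : Set (E n)))
          + hausdorffDist (g '' (K.1 : Set (E n))) (g '' (K0.1 : Set (E n))) :=
      hausdorffDist_triangle fin1
    have t1 : hausdorffDist (fK '' (K.1 : Set (E n))) (g '' (K.1 : Set (E n))) ≤ m1 :=
      hdist_pointwise K.1.nonempty hm1n hpt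
    have t2 : hausdorffDist (g '' (K.1 : Set (E n))) (g '' (K0.1 : Set (E n)))
        ≤ r0⁻¹ * hausdorffDist (K.1 : Set (E n)) (K0.1 : Set (E n)) :=
      hdist_lipschitz K.1.isCompact K.1.nonempty K0.1.isCompact K0.1.nonempty
        (by positivity) hgl
    have hdeq : hausdorffDist (K.1 : Set (E n)) (K0.1 : Set (E n)) = d := by
      rw [hddef, Subtype.dist_eq, Metric.NonemptyCompacts.dist_eq]
    rw [hdeq] at t2
    rw [hKset, hK0set]
    have hsd : 0 ≤ Real.sqrt d := Real.sqrt_nonneg d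
    have e1 : 0 ≤ 4 * Real.sqrt r0 / r0 := div_nonneg (by positivity) hr0p.le
    have e2 : 0 ≤ 2 * (r0 + 1) / r0 ^ 2 := div_nonneg (by linarith) (sq_nonneg r0)
    have e3 : 0 ≤ 1 / r0 := one_div_nonneg.mpr hr0p.le
    have ha : 2 * (r0 + 1) / r0 ^ 2 + r0⁻¹ ≤ C := by
      rw [hCdef, ← one_div]
      linarith
    have hb : 4 * Real.sqrt r0 / r0 ≤ C := by
      rw [hCdef]
      linarith
    calc hausdorffDist (fK '' (K.1 : Set (E n))) (g '' (K0.1 : Set (E n)))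
        ≤ m1 + r0⁻¹ * d := le_trans tri (add_le_add t1 t2)
    _ = (2 * (r0 + 1) / r0 ^ 2 + r0⁻¹) * d + 4 * Real.sqrt r0 / r0 * Real.sqrt d := by
        rw [hm1def]; ring
    _ ≤ C * d + C * Real.sqrt d := by
        gcongr
    _ = C * (d + Real.sqrt d) := by ring

lemma cont_toFun : Continuous (toFunΦ R c hRc) :=
  Continuous.prodMk ((cont_fwd R c hRc).subtype_mk _)
    (Continuous.prodMk (cont_c R c hRc) ((cont_R R c hRc).subtype_mk _))

omit hRc in
lemma cont_invNC : Continuous (fun p : BHyp' n × E n × {l : ℝ // 0 < l} =>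
    (⟨⟨invSet p.1 p.2.1 p.2.2, compact_affine_image p.1.1.isCompact⟩,
      p.1.1.nonempty.image _⟩ : TopologicalSpace.NonemptyCompacts (E n))) := by
  rw [continuous_iff_continuousAt]
  rintro ⟨A0, x0, l0⟩
  apply continuousAt_of_bound (F := fun t => ((l0 : ℝ) + 2) * t)
  · exact linF (by have := l0.2; linarith)
  · refine ⟨1, one_pos, ?_⟩
    rintro ⟨A, x, l⟩ _
    set p := ((A, x, l) : BHyp' n × E n × {l : ℝ // 0 < l}) with hp
    set p0 := ((A0, x0, l0) : BHyp' n × E n × {l : ℝ // 0 < l}) with hp0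
    set d := dist p p0 with hd
    have hdn : 0 ≤ d := dist_nonneg
    have hA : hausdorffDist (A.1 : Set (E n)) (A0.1 : Set (E n)) ≤ d := by
      have h1 : dist p.1 p0.1 ≤ d := by rw [hd, Prod.dist_eq]; exact le_max_left _ _
      rwa [Subtype.dist_eq, Metric.NonemptyCompacts.dist_eq] at h1
    have hx : dist x x0 ≤ d := by
      have h1 : dist p.2 p0.2 ≤ d := by rw [hd, Prod.dist_eq]; exact le_max_right _ _
      have h2 : dist p.2.1 p0.2.1 ≤ dist p.2 p0.2 := by
        rw [Prod.dist_eq]; exact le_max_left _ _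
      exact le_trans h2 h1
    have hl : |(l : ℝ) - (l0 : ℝ)| ≤ d := by
      have h1 : dist p.2 p0.2 ≤ d := by rw [hd, Prod.dist_eq]; exact le_max_right _ _
      have h2 : dist p.2.2 p0.2.2 ≤ dist p.2 p0.2 := by
        rw [Prod.dist_eq]; exact le_max_right _ _
      have := le_trans h2 h1
      rwa [Subtype.dist_eq, Real.dist_eq] at this
    show dist _ _ ≤ ((l0 : ℝ) + 2) * d
    rw [Metric.NonemptyCompacts.dist_eq]
    show hausdorffDist (invSet A x l) (invSet A0 x0 l0) ≤ ((l0 : ℝ) + 2) * d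
    set mid : Set (E n) := (fun y => (l0 : ℝ) • y + x0) '' (A.1 : Set (E n)) with hmid
    have hc1 : IsCompact (invSet A x l) := compact_affine_image A.1.isCompact
    have hc2 : IsCompact mid := compact_affine_image A.1.isCompact
    have fin1 : EMetric.hausdorffEdist (invSet A x l) mid ≠ ⊤ :=
      hausdorffEdist_ne_top_of_nonempty_of_bounded (A.1.nonempty.image _) (A.1.nonempty.image _)
        hc1.isBounded hc2.isBounded
    have tri : hausdorffDist (invSet A x l) (invSet A0 x0 l0)
        ≤ hausdorffDist (invSet A x l) mid + hausdorffDist mid (invSet A0 x0 l0) :=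
      hausdorffDist_triangle fin1
    have t1 : hausdorffDist (invSet A x l) mid ≤ d + d := by
      apply hdist_pointwise A.1.nonempty (by linarith)
      intro y hy
      have hy1 : ‖y‖ ≤ 1 := by
        have := A.2.2.2.1 hy
        simpa [dist_zero_right] using this
      have hsplit : ((l : ℝ) • y + x) - ((l0 : ℝ) • y + x0)
          = ((l : ℝ) - (l0 : ℝ)) • y + (x - x0) := by
        rw [sub_smul]; abel
      calc dist ((l : ℝ) • y + x) ((l0 : ℝ) • y + x0)
          = ‖((l : ℝ) - (l0 : ℝ)) • y + (x - x0)‖ := by rw [dist_eq_norm, hsplit]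
      _ ≤ ‖((l : ℝ) - (l0 : ℝ)) • y‖ + ‖x - x0‖ := norm_add_le _ _
      _ = |(l : ℝ) - (l0 : ℝ)| * ‖y‖ + dist x x0 := by
          rw [norm_smul, Real.norm_eq_abs, dist_eq_norm]
      _ ≤ d * 1 + d := add_le_add (mul_le_mul hl hy1 (norm_nonneg _) hdn) hx
      _ = d + d := by ring
    have t2 : hausdorffDist mid (invSet A0 x0 l0) ≤ (l0 : ℝ) * d := by
      have hlip : ∀ y z : E n, dist ((l0 : ℝ) • y + x0) ((l0 : ℝ) • z + x0)
          ≤ (l0 : ℝ) * dist y z := by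
        intro y z
        rw [dist_eq_norm, dist_eq_norm]
        have : ((l0 : ℝ) • y + x0) - ((l0 : ℝ) • z + x0) = (l0 : ℝ) • (y - z) := by
          rw [smul_sub]; abel
        rw [this, norm_smul, Real.norm_eq_abs, abs_of_pos l0.2]
      have := hdist_lipschitz A.1.isCompact A.1.nonempty A0.1.isCompact A0.1.nonempty
        l0.2.le hlip
      exact le_trans this (mul_le_mul_of_nonneg_left hA l0.2.le)
    calc hausdorffDist (invSet A x l) (invSet A0 x0 l0) ≤ (d + d) + (l0 : ℝ) * d := by
          linarith
    _ = ((l0 : ℝ) + 2) * d := by ring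

omit hRc in
lemma cont_invFun : Continuous (invFunΦ : BHyp' n × E n × {l : ℝ // 0 < l} → KHyp' n) :=
  (cont_invNC (n := n)).subtype_mk _

def homΦ : KHyp' n ≃ₜ (BHyp' n × E n × {l : ℝ // 0 < l}) where
  toFun := toFunΦ R c hRc
  invFun := invFunΦ
  left_inv := left_invΦ R c hRc
  right_inv := right_invΦ R c hRc
  continuous_toFun := cont_toFun R c hRc
  continuous_invFun := cont_invFun (n := n)

end Main

/-- The hyperspace of non-degenerated compact convex sets, with the Hausdorff metric. -/
abbrev KHyp (n : ℕ) :=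
  {K : TopologicalSpace.NonemptyCompacts (E n) //
    Convex ℝ (K : Set (E n)) ∧ (K : Set (E n)).Nontrivial}

/-- ℬⁿ : those whose circumball is the closed unit ball. -/
abbrev BHyp (n : ℕ) :=
  {K : TopologicalSpace.NonemptyCompacts (E n) //
    Convex ℝ (K : Set (E n)) ∧ (K : Set (E n)).Nontrivial ∧ IsCircumball (K : Set (E n)) 0 1}

theorem stmt5 {n : ℕ} (hn : 2 ≤ n) (R : Set (E n) → ℝ) (c : Set (E n) → E n)
    (hRc : ∀ A : Set (E n), IsCompact A → Convex ℝ A → A.Nontrivial →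
      IsCircumball A (c A) (R A)) :
    ∃ Φ : KHyp n ≃ₜ BHyp n × E n × {l : ℝ // 0 < l},
      (∀ K : KHyp n,
        ((Φ K).1.1 : Set (E n))
            = (fun x => (R (K.1 : Set (E n)))⁻¹ • (x - c (K.1 : Set (E n)))) '' (K.1 : Set (E n)) ∧
        (Φ K).2.1 = c (K.1 : Set (E n)) ∧
        ((Φ K).2.2 : ℝ) = R (K.1 : Set (E n))) ∧
      (∀ (A : BHyp n) (x : E n) (l : {l : ℝ // 0 < l}),
        ((Φ.symm (A, x, l)).1 : Set (E n)) = (fun y => (l : ℝ) • y + x) '' (A.1 : Set (E n))) := by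
  exact ⟨homΦ R c hRc, fun K => ⟨rfl, rfl, rfl⟩, fun A x l => rfl⟩
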